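/- Let f(X) = a_0 + a_1 X + ... + a_n X^n ∈ Z[X] with a_0 a_n ≠ 0, let k ≥ 2, and let p_1, ..., p_k be pairwise distinct primes. Assume for each i = 1, ..., k that n · ν_{p_i}(a_j) ≥ (n − j) · ν_{p_i}(a_0) + j · ν_{p_i}(a_n) for j = 1, ..., n-1, where exactly one of ν_{p_i}(a_0) and ν_{p_i}(a_n) is zero, and denote the nonzero one by α_i. If gcd(gcd(α_1, n), ..., gcd(α_k, n)) = 1, then f is irreducible over Q. -/

import Mathlib

open Polynomial Finset

lemma emu_eq_padic {p : ℕ} (hp : p.Prime) {m : ℤ} (hm : m ≠ 0) :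
    emultiplicity (p:ℤ) m = (padicValInt p m : ℕ∞) := by
  haveI : Fact p.Prime := ⟨hp⟩
  rw [← Int.emultiplicity_natAbs, padicValInt,
    padicValNat_eq_emultiplicity (Int.natAbs_ne_zero.mpr hm)]

lemma emu_sum_eq {ι : Type*} [DecidableEq ι] {p : ℤ} (s : Finset ι) (f : ι → ℤ) (i0 : ι)
    (hi0 : i0 ∈ s)
    (hlt : ∀ i ∈ s, i ≠ i0 → emultiplicity p (f i0) < emultiplicity p (f i)) :
    emultiplicity p (∑ i ∈ s, f i) = emultiplicity p (f i0) := by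
  by_cases htop : emultiplicity p (f i0) = ⊤
  · have : s = {i0} := by
      apply Finset.eq_singleton_iff_unique_mem.2
      refine ⟨hi0, fun i hi => ?_⟩
      by_contra hne
      exact absurd (htop ▸ hlt i hi hne) (by simp)
    simp [this]
  · obtain ⟨m, hm⟩ : ∃ m : ℕ, emultiplicity p (f i0) = (m : ℕ∞) := by
      obtain ⟨m, hm⟩ := WithTop.ne_top_iff_exists.1 htop
      exact ⟨m, by exact_mod_cast hm.symm⟩
    obtain ⟨hdvd, hndvd⟩ := emultiplicity_eq_coe.1 hm
    rw [hm, emultiplicity_eq_coe]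
    have hrest : ∀ i ∈ s, i ≠ i0 → p ^ (m + 1) ∣ f i := by
      intro i hi hne
      apply pow_dvd_of_le_emultiplicity
      have := hlt i hi hne
      rw [hm] at this
      exact Order.add_one_le_of_lt (by exact_mod_cast this)
    constructor
    · apply Finset.dvd_sum
      intro i hi
      rcases eq_or_ne i i0 with rfl | hne
      · exact hdvd
      · exact dvd_trans (pow_dvd_pow p (Nat.le_succ m)) (hrest i hi hne)
    · intro hcon
      apply hndvd
      have hsum : ∑ i ∈ s, f i = f i0 + ∑ i ∈ s.erase i0, f i := (Finset.add_sum_erase s f hi0).symm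
      have h2 : p ^ (m + 1) ∣ ∑ i ∈ s.erase i0, f i := by
        apply Finset.dvd_sum
        intro i hi
        exact hrest i (Finset.mem_of_mem_erase hi) (Finset.ne_of_mem_erase hi)
      have : f i0 = (∑ i ∈ s, f i) - ∑ i ∈ s.erase i0, f i := by rw [hsum]; ring
      rw [this]
      exact dvd_sub hcon h2

lemma enat_force {a b A B : ℕ∞} (hA : A ≠ ⊤) (hB : B ≠ ⊤) (ha : a ≤ A) (hb : b ≤ B)
    (hs : A + B ≤ a + b) : a = A ∧ b = B := by
  constructor
  · by_contra hc
    have h1 : a < A := lt_of_le_of_ne ha hc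
    have : a + b < A + B := by
      calc a + b ≤ a + B := add_le_add_right hb a
      _ < A + B := (WithTop.add_lt_add_iff_right hB).2 h1
    exact absurd hs (not_le.2 this)
  · by_contra hc
    have h1 : b < B := lt_of_le_of_ne hb hc
    have : a + b < A + B := by
      calc a + b ≤ A + b := add_le_add_left ha b
      _ < A + B := (WithTop.add_lt_add_iff_left hA).2 h1
    exact absurd hs (not_le.2 this)


lemma keyA (p : ℕ) (hp : p.Prime) (g h : Polynomial ℤ) (hg : 0 < g.natDegree)
    (hh : 0 < h.natDegree) (α : ℕ)
    (h0 : emultiplicity ((p:ℤ)) ((g*h).coeff 0) = 0)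
    (h1 : emultiplicity ((p:ℤ)) ((g*h).coeff (g.natDegree + h.natDegree)) = (α:ℕ∞))
    (hline : ∀ j ≤ g.natDegree + h.natDegree,
      (j:ℕ∞) * (α:ℕ∞) ≤ ((g.natDegree + h.natDegree : ℕ):ℕ∞) *
        emultiplicity ((p:ℤ)) ((g*h).coeff j)) :
    (g.natDegree + h.natDegree) ∣ g.natDegree * α := by
  classical
  have hpZ : Prime (p:ℤ) := Nat.prime_iff_prime_int.mp hp
  set d := g.natDegree with hd
  set e := h.natDegree with he
  set n := d + e with hn
  have hnpos : 0 < n := by omega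
  have hncast : ((n:ℕ∞)) ≠ 0 := by exact_mod_cast hnpos.ne'
  set V : ℤ → ℕ∞ := fun x => emultiplicity (p:ℤ) x with hV
  have mul_reflect : ∀ x y : ℕ∞, (n:ℕ∞) * x < (n:ℕ∞) * y → x < y := by
    intro x y hxy
    by_contra hc
    push_neg at hc
    exact absurd (mul_le_mul_right hc (n:ℕ∞)) (not_le.2 hxy)
  have hVmul : ∀ x y : ℤ, V (x*y) = V x + V y := fun x y => emultiplicity_mul hpZ
  have h00 : V (g.coeff 0) = 0 ∧ V (h.coeff 0) = 0 := by
    apply add_eq_zero.1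
    rw [← hVmul, ← Polynomial.mul_coeff_zero]
    exact h0
  set tg : ℕ → ℕ∞ := fun j => (n:ℕ∞) * V (g.coeff j) + ((d - j : ℕ):ℕ∞) * (α:ℕ∞) with htg
  set th : ℕ → ℕ∞ := fun l => (n:ℕ∞) * V (h.coeff l) + ((e - l : ℕ):ℕ∞) * (α:ℕ∞) with hth
  set M : ℕ∞ := (range (d+1)).inf tg with hM
  set N : ℕ∞ := (range (e+1)).inf th with hN
  have hMle : M ≤ (d:ℕ∞) * (α:ℕ∞) := by
    calc M ≤ tg 0 := Finset.inf_le (mem_range.2 (by omega))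
    _ = (d:ℕ∞) * (α:ℕ∞) := by simp [htg, h00.1]
  have hNle : N ≤ (e:ℕ∞) * (α:ℕ∞) := by
    calc N ≤ th 0 := Finset.inf_le (mem_range.2 (by omega))
    _ = (e:ℕ∞) * (α:ℕ∞) := by simp [hth, h00.2]
  have hcastfin : ∀ x y : ℕ, ((x:ℕ∞)) * (y:ℕ∞) ≠ ⊤ := by
    intro x y
    rw [← Nat.cast_mul]
    exact ENat.coe_ne_top _
  have hMtop : M ≠ ⊤ := ne_top_of_le_ne_top (hcastfin d α) hMle
  have hNtop : N ≠ ⊤ := ne_top_of_le_ne_top (hcastfin e α) hNle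
  -- least minimizers
  have hexg : ∃ j, j ≤ d ∧ tg j = M := by
    obtain ⟨j, hj, hje⟩ := Finset.exists_mem_eq_inf (range (d+1)) ⟨0, mem_range.2 (by omega)⟩ tg
    exact ⟨j, Nat.lt_succ_iff.mp (mem_range.1 hj), hje.symm⟩
  have hexh : ∃ l, l ≤ e ∧ th l = N := by
    obtain ⟨l, hl, hle⟩ := Finset.exists_mem_eq_inf (range (e+1)) ⟨0, mem_range.2 (by omega)⟩ th
    exact ⟨l, Nat.lt_succ_iff.mp (mem_range.1 hl), hle.symm⟩
  obtain ⟨j0, hj0d, hj0M, hj0min⟩ :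
      ∃ j0, j0 ≤ d ∧ tg j0 = M ∧ ∀ r, r < j0 → M < tg r := by
    refine ⟨Nat.find hexg, (Nat.find_spec hexg).1, (Nat.find_spec hexg).2, ?_⟩
    intro r hr
    have hrd : r ≤ d := le_trans (le_of_lt hr) (Nat.find_spec hexg).1
    have h1' : M ≤ tg r := Finset.inf_le (mem_range.2 (by omega))
    have h2' : tg r ≠ M := fun hcc => Nat.find_min hexg hr ⟨hrd, hcc⟩
    exact lt_of_le_of_ne h1' (Ne.symm h2')
  obtain ⟨l0, hl0e, hl0N, hl0min⟩ :
      ∃ l0, l0 ≤ e ∧ th l0 = N ∧ ∀ t, t < l0 → N < th t := by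
    refine ⟨Nat.find hexh, (Nat.find_spec hexh).1, (Nat.find_spec hexh).2, ?_⟩
    intro t ht
    have hte : t ≤ e := le_trans (le_of_lt ht) (Nat.find_spec hexh).1
    have h1' : N ≤ th t := Finset.inf_le (mem_range.2 (by omega))
    have h2' : th t ≠ N := fun hcc => Nat.find_min hexh ht ⟨hte, hcc⟩
    exact lt_of_le_of_ne h1' (Ne.symm h2')
  -- finiteness of key valuations
  have hmulfin : ∀ x : ℤ, (n:ℕ∞) * V x ≠ ⊤ → V x ≠ ⊤ := by
    intro x hx hc
    rw [hc] at hx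
    exact hx (ENat.mul_top hncast)
  have hAfin : V (g.coeff j0) ≠ ⊤ := by
    apply hmulfin
    intro hc
    apply hMtop
    rw [← hj0M]
    simp only [htg]
    rw [hc, top_add]
  have hBfin : V (h.coeff l0) ≠ ⊤ := by
    apply hmulfin
    intro hc
    apply hNtop
    rw [← hl0N]
    simp only [hth]
    rw [hc, top_add]
  -- expansion lemma
  have hexpand : ∀ u v : ℕ, u ≤ d → v ≤ e → u + v = j0 + l0 →
      tg u + th v = (n:ℕ∞) * (V (g.coeff u) + V (h.coeff v))
        + ((n - (j0 + l0) : ℕ):ℕ∞) * (α:ℕ∞) := by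
    intro u v hu hv huv
    have hcc : ((d - u : ℕ):ℕ∞) * (α:ℕ∞) + ((e - v : ℕ):ℕ∞) * (α:ℕ∞)
        = ((n - (j0 + l0) : ℕ):ℕ∞) * (α:ℕ∞) := by
      rw [← add_mul]
      congr 1
      rw [← Nat.cast_add]
      congr 1
      omega
    simp only [htg, hth]
    rw [mul_add]
    rw [← hcc]
    ring
  have hCfin : ((n - (j0 + l0) : ℕ):ℕ∞) * (α:ℕ∞) ≠ ⊤ := hcastfin _ _
  -- the key ultrametric step
  have hstep : V ((g*h).coeff (j0 + l0)) = V (g.coeff j0) + V (h.coeff l0) := by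
    rw [coeff_mul]
    have := emu_sum_eq (p := ((p:ℕ):ℤ)) (antidiagonal (j0+l0)) (fun x => g.coeff x.1 * h.coeff x.2) (j0, l0)
      (Finset.HasAntidiagonal.mem_antidiagonal.2 rfl) ?_
    · exact Eq.trans (by exact this) (hVmul _ _)
    · rintro ⟨r, s⟩ hx hne
      rw [Finset.HasAntidiagonal.mem_antidiagonal] at hx
      simp only [] at hx ⊢
      show V (g.coeff j0 * h.coeff l0) < V (g.coeff r * h.coeff s)
      rw [hVmul, hVmul]
      have hABfin : V (g.coeff j0) + V (h.coeff l0) ≠ ⊤ := by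
        rw [Ne, ENat.add_eq_top]
        tauto
      have hrne : r ≠ j0 := by
        intro hc
        apply hne
        have : s = l0 := by omega
        simp [hc, this]
      have hmain : ∀ {r' s' : ℕ}, r' ≤ d → s' ≤ e → r' + s' = j0 + l0 →
          tg j0 + th l0 < tg r' + th s' →
          V (g.coeff j0) + V (h.coeff l0) < V (g.coeff r') + V (h.coeff s') := by
        intro r' s' hr' hs' hsum hts
        rw [hexpand j0 l0 hj0d hl0e rfl, hexpand r' s' hr' hs' hsum] at hts
        exact mul_reflect _ _ ((WithTop.add_lt_add_iff_right hCfin).1 hts)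
      rcases lt_or_gt_of_ne hrne with hlt' | hgt'
      · -- r < j0, so s > l0
        by_cases hse : s ≤ e
        · apply hmain (by omega) hse hx
          calc tg j0 + th l0 < tg r + th l0 := by
                rw [hj0M]
                exact (WithTop.add_lt_add_iff_right
                  (ne_top_of_le_ne_top (hcastfin e α) (hl0N ▸ hNle))).2 (hj0min r hlt')
          _ ≤ tg r + th s := add_le_add_right (hl0N ▸ Finset.inf_le (mem_range.2 (by omega))) _
        · have hz : h.coeff s = 0 := coeff_eq_zero_of_natDegree_lt (by omega)
          rw [hz]
          have : V (0:ℤ) = ⊤ := emultiplicity_zero _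
          rw [this, add_top]
          exact lt_top_iff_ne_top.2 hABfin
      · -- r > j0, so s < l0 ≤ e
        have hsl : s < l0 := by omega
        by_cases hrd : r ≤ d
        · apply hmain hrd (by omega) hx
          calc tg j0 + th l0 < tg j0 + th s := by
                rw [hl0N]
                exact (WithTop.add_lt_add_iff_left
                  (ne_top_of_le_ne_top (hcastfin d α) (hj0M ▸ hMle))).2 (hl0min s hsl)
          _ ≤ tg r + th s := add_le_add_left (hj0M ▸ Finset.inf_le (mem_range.2 (by omega))) _
        · have hz : g.coeff r = 0 := coeff_eq_zero_of_natDegree_lt (by omega)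
          rw [hz]
          have : V (0:ℤ) = ⊤ := emultiplicity_zero _
          rw [this, top_add]
          exact lt_top_iff_ne_top.2 hABfin
  -- lower bound M + N ≥ n α
  have hMN : ((n:ℕ∞)) * (α:ℕ∞) ≤ M + N := by
    have hj0l0 : j0 + l0 ≤ n := by omega
    have hl := hline (j0 + l0) hj0l0
    rw [show emultiplicity ((p:ℤ)) ((g*h).coeff (j0+l0)) = V ((g*h).coeff (j0+l0)) from rfl,
      hstep] at hl
    calc (n:ℕ∞) * (α:ℕ∞)
        = ((j0 + l0 : ℕ):ℕ∞) * (α:ℕ∞) + ((n - (j0 + l0) : ℕ):ℕ∞) * (α:ℕ∞) := by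
          rw [← add_mul, ← Nat.cast_add]
          congr 2
          omega
      _ ≤ (n:ℕ∞) * (V (g.coeff j0) + V (h.coeff l0)) + ((n - (j0 + l0) : ℕ):ℕ∞) * (α:ℕ∞) := by
          apply add_le_add_left
          exact_mod_cast hl
      _ = tg j0 + th l0 := (hexpand j0 l0 hj0d hl0e rfl).symm
      _ = M + N := by rw [hj0M, hl0N]
  -- forcing: M = dα, N = eα
  have hforce := enat_force (hcastfin d α) (hcastfin e α) hMle hNle (by
    calc (d:ℕ∞) * (α:ℕ∞) + (e:ℕ∞) * (α:ℕ∞) = (n:ℕ∞) * (α:ℕ∞) := by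
          rw [← add_mul, ← Nat.cast_add]
      _ ≤ M + N := hMN)
  -- leading coefficients
  have hgne : g ≠ 0 := fun hc => by simp [hd, hc] at hg
  have hhne : h ≠ 0 := fun hc => by simp [he, hc] at hh
  have hlg : g.coeff d ≠ 0 := by
    rw [hd]
    exact leadingCoeff_ne_zero.2 hgne
  have hlh : h.coeff e ≠ 0 := by
    rw [he]
    exact leadingCoeff_ne_zero.2 hhne
  have hVlg : V (g.coeff d) ≠ ⊤ := by
    show emultiplicity ((p:ℕ):ℤ) (g.coeff d) ≠ ⊤
    rw [emu_eq_padic hp hlg]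
    exact ENat.coe_ne_top _
  have hVlh : V (h.coeff e) ≠ ⊤ := by
    show emultiplicity ((p:ℕ):ℤ) (h.coeff e) ≠ ⊤
    rw [emu_eq_padic hp hlh]
    exact ENat.coe_ne_top _
  have hmulfin2 : ∀ x : ℤ, V x ≠ ⊤ → (n:ℕ∞) * V x ≠ ⊤ := by
    intro x hx hc
    rcases WithTop.mul_eq_top_iff.1 hc with ⟨_, h2⟩ | ⟨h1, _⟩
    · exact hx h2
    · exact ENat.coe_ne_top n h1
  have htop2 : (n:ℕ∞) * V (g.coeff d) ≠ ⊤ ∧ (n:ℕ∞) * V (h.coeff e) ≠ ⊤ :=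
    ⟨hmulfin2 _ hVlg, hmulfin2 _ hVlh⟩
  have hd_le : (d:ℕ∞) * (α:ℕ∞) ≤ (n:ℕ∞) * V (g.coeff d) := by
    have h1' : M ≤ tg d := Finset.inf_le (mem_range.2 (by omega))
    rw [hforce.1] at h1'
    calc (d:ℕ∞) * (α:ℕ∞) ≤ tg d := h1'
    _ = (n:ℕ∞) * V (g.coeff d) := by simp [htg]
  have he_le : (e:ℕ∞) * (α:ℕ∞) ≤ (n:ℕ∞) * V (h.coeff e) := by
    have h1' : N ≤ th e := Finset.inf_le (mem_range.2 (by omega))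
    rw [hforce.2] at h1'
    calc (e:ℕ∞) * (α:ℕ∞) ≤ th e := h1'
    _ = (n:ℕ∞) * V (h.coeff e) := by simp [hth]
  have hsum_top : (n:ℕ∞) * V (g.coeff d) + (n:ℕ∞) * V (h.coeff e) = (n:ℕ∞) * (α:ℕ∞) := by
    rw [← mul_add, ← hVmul]
    congr 1
    have hcm : (g * h).coeff n = g.coeff d * h.coeff e := by
      rw [hn, hd, he]
      exact coeff_mul_degree_add_degree g h
    rw [← hcm]
    exact h1
  have hforce2 := enat_force htop2.1 htop2.2 hd_le he_le (by
    rw [hsum_top, ← add_mul, ← Nat.cast_add])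
  -- extract the natural number equation
  obtain ⟨v, hv⟩ : ∃ v : ℕ, V (g.coeff d) = (v:ℕ∞) :=
    ⟨padicValInt p (g.coeff d), by
      show emultiplicity ((p:ℕ):ℤ) (g.coeff d) = _
      exact emu_eq_padic hp hlg⟩
  rw [hv] at hforce2
  have : d * α = n * v := by
    have := hforce2.1
    rw [← Nat.cast_mul, ← Nat.cast_mul] at this
    exact_mod_cast this
  exact ⟨v, this⟩

lemma keyB (p : ℕ) (hp : p.Prime) (g h : Polynomial ℤ) (hg : 0 < g.natDegree)
    (hh : 0 < h.natDegree) (α : ℕ)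
    (h0 : emultiplicity ((p:ℤ)) ((g*h).coeff (g.natDegree + h.natDegree)) = 0)
    (h1 : emultiplicity ((p:ℤ)) ((g*h).coeff 0) = (α:ℕ∞))
    (hline : ∀ j ≤ g.natDegree + h.natDegree,
      ((g.natDegree + h.natDegree - j : ℕ):ℕ∞) * (α:ℕ∞) ≤ ((g.natDegree + h.natDegree : ℕ):ℕ∞) *
        emultiplicity ((p:ℤ)) ((g*h).coeff j)) :
    (g.natDegree + h.natDegree) ∣ g.natDegree * α := by
  set d := g.natDegree with hd
  set e := h.natDegree with he
  have hgne : g ≠ 0 := fun hc => by simp [hd, hc] at hg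
  have hhne : h ≠ 0 := fun hc => by simp [he, hc] at hh
  have hghne : g * h ≠ 0 := mul_ne_zero hgne hhne
  have hndeg : (g*h).natDegree = d + e := natDegree_mul hgne hhne
  have hc0 : (g*h).coeff 0 ≠ 0 := by
    intro hc
    rw [hc, emultiplicity_zero] at h1
    exact (ENat.coe_ne_top α) h1.symm
  have hg0 : g.coeff 0 ≠ 0 := by
    intro hc
    rw [Polynomial.mul_coeff_zero, hc, zero_mul] at hc0
    exact hc0 rfl
  have hh0 : h.coeff 0 ≠ 0 := by
    intro hc
    rw [Polynomial.mul_coeff_zero, hc, mul_zero] at hc0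
    exact hc0 rfl
  have hdg : g.reverse.natDegree = d := by
    rw [reverse_natDegree, natTrailingDegree_eq_zero.2 (Or.inr hg0), Nat.sub_zero]
  have hdh : h.reverse.natDegree = e := by
    rw [reverse_natDegree, natTrailingDegree_eq_zero.2 (Or.inr hh0), Nat.sub_zero]
  have hrev : g.reverse * h.reverse = (g*h).reverse := (reverse_mul_of_domain g h).symm
  have hcoeff : ∀ j ≤ d + e, (g.reverse * h.reverse).coeff j = (g*h).coeff (d + e - j) := by
    intro j hj
    rw [hrev, coeff_reverse, hndeg, revAt_le hj]
  have key := keyA p hp g.reverse h.reverse (by rw [hdg]; exact hg) (by rw [hdh]; exact hh) α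
    (by rw [hcoeff 0 (by omega), Nat.sub_zero]; exact h0)
    (by rw [hdg, hdh, hcoeff (d+e) le_rfl, Nat.sub_self]; exact h1)
    (by
      intro j hj
      rw [hdg, hdh] at hj ⊢
      rw [hcoeff j hj]
      have h2 := hline (d + e - j) (by omega)
      rwa [show d + e - (d + e - j) = j by omega] at h2)
  rwa [hdg, hdh] at key


theorem theorem_1_1 (n : ℕ) (hn : 1 ≤ n) (a : ℕ → ℤ)
    (ha0 : a 0 ≠ 0) (han : a n ≠ 0)
    (k : ℕ) (hk : 2 ≤ k) (p : Fin k → ℕ) (hp : ∀ i, (p i).Prime)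
    (hpp : Function.Injective p)
    (α : Fin k → ℕ)
    (hα : ∀ i, (padicValInt (p i) (a 0) = 0 ∧ padicValInt (p i) (a n) = α i ∧ α i ≠ 0) ∨
               (padicValInt (p i) (a n) = 0 ∧ padicValInt (p i) (a 0) = α i ∧ α i ≠ 0))
    (hineq : ∀ i, ∀ j, 1 ≤ j → j ≤ n - 1 →
      n * padicValInt (p i) (a j) ≥
        (n - j) * padicValInt (p i) (a 0) + j * padicValInt (p i) (a n))
    (hgcd : Finset.univ.gcd (fun i => Nat.gcd (α i) n) = 1) :
    Irreducible ((∑ i ∈ range (n+1), C (a i) * X ^ i).map (Int.castRingHom ℚ)) := by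
  classical
  set f : Polynomial ℤ := ∑ i ∈ range (n+1), C (a i) * X ^ i with hf
  have hcoeff : ∀ j, j ≤ n → f.coeff j = a j := by
    intro j hj
    rw [hf, finset_sum_coeff]
    simp only [coeff_C_mul_X_pow]
    simp [Nat.lt_succ_iff, hj]
  have hfn : f.coeff n = a n := hcoeff n le_rfl
  have hfc0 : f.coeff 0 = a 0 := hcoeff 0 (by omega)
  have hfne : f ≠ 0 := fun hc => han (by rw [← hfn, hc, coeff_zero])
  have hdeg : f.natDegree = n := by
    apply le_antisymm
    · rw [natDegree_le_iff_coeff_eq_zero]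
      intro N hN
      rw [hf, finset_sum_coeff]
      apply Finset.sum_eq_zero
      intro i hi
      rw [coeff_C_mul_X_pow]
      rw [mem_range] at hi
      have : N ≠ i := by omega
      simp [this]
    · exact le_natDegree_of_ne_zero (hfn ▸ han)
  set q := f.primPart with hqdef
  have hqprim : q.IsPrimitive := isPrimitive_primPart f
  have hfq : f = C f.content * q := eq_C_content_mul_primPart f
  have hqdeg : q.natDegree = n := by rw [hqdef, natDegree_primPart, hdeg]
  have hcontne : f.content ≠ 0 := fun hc => hfne (content_eq_zero_iff.1 hc)
  have hqne : q ≠ 0 := fun hc => hfne (by rw [hfq, hc, mul_zero])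
  suffices hirr : Irreducible q by
    have hmap : f.map (Int.castRingHom ℚ) = C ((f.content : ℚ)) * q.map (Int.castRingHom ℚ) := by
      conv_lhs => rw [hfq]
      rw [Polynomial.map_mul, map_C]
      norm_num
    rw [hmap]
    have h2 : Irreducible (q.map (Int.castRingHom ℚ)) :=
      (IsPrimitive.Int.irreducible_iff_irreducible_map_cast hqprim).1 hirr
    have hcq : (f.content : ℚ) ≠ 0 := Int.cast_ne_zero.2 hcontne
    have hu : IsUnit (C (f.content:ℚ)) := isUnit_C.2 (isUnit_iff_ne_zero.2 hcq)
    have hass : Associated (q.map (Int.castRingHom ℚ))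
        (C (f.content:ℚ) * q.map (Int.castRingHom ℚ)) :=
      ⟨hu.unit, by rw [IsUnit.unit_spec]; ring⟩
    exact hass.irreducible h2
  constructor
  · intro hu
    have := natDegree_eq_zero_of_isUnit hu
    omega
  · intro g h hq2
    by_contra hcon
    push_neg at hcon
    obtain ⟨hgu, hhu⟩ := hcon
    have hgne : g ≠ 0 := fun hc => hqne (by rw [hq2, hc, zero_mul])
    have hhne : h ≠ 0 := fun hc => hqne (by rw [hq2, hc, mul_zero])
    have hgpos : 0 < g.natDegree := by
      rcases Nat.eq_zero_or_pos g.natDegree with h0 | h1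
      · exfalso
        apply hgu
        have hgc : g = C (g.coeff 0) := eq_C_of_natDegree_eq_zero h0
        rw [hgc]
        rw [isUnit_C]
        exact hqprim (g.coeff 0) (by rw [← hgc]; exact ⟨h, hq2⟩)
      · exact h1
    have hhpos : 0 < h.natDegree := by
      rcases Nat.eq_zero_or_pos h.natDegree with h0 | h1
      · exfalso
        apply hhu
        have hhc : h = C (h.coeff 0) := eq_C_of_natDegree_eq_zero h0
        rw [hhc]
        rw [isUnit_C]
        exact hqprim (h.coeff 0) (by rw [← hhc]; exact ⟨g, by rw [hq2, mul_comm]⟩)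
      · exact h1
    have hsumdeg : g.natDegree + h.natDegree = n := by
      rw [← hqdeg, hq2, natDegree_mul hgne hhne]
    have hghq : g * h = q := hq2.symm
    -- the crucial divisibility, for every i
    have hdvd : ∀ i, n ∣ g.natDegree * α i := by
      intro i
      set P := p i with hP
      have hPp : P.Prime := hp i
      have hPZ : Prime ((P:ℕ):ℤ) := Nat.prime_iff_prime_int.mp hPp
      have haj : ∀ j, j ≤ n → a j = f.content * q.coeff j := by
        intro j hj
        rw [← hcoeff j hj]
        conv_lhs => rw [hfq]
        rw [coeff_C_mul]
      rcases hα i with ⟨hv0, hvn, hαne⟩ | ⟨hvn, hv0, hαne⟩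
      · -- ν(a0) = 0, ν(an) = α i : use keyA
        have hVa0 : emultiplicity ((P:ℕ):ℤ) (a 0) = 0 := by
          rw [emu_eq_padic hPp ha0, hv0, Nat.cast_zero]
        have hVan : emultiplicity ((P:ℕ):ℤ) (a n) = ((α i : ℕ):ℕ∞) := by
          rw [emu_eq_padic hPp han, hvn]
        have hVcont : emultiplicity ((P:ℕ):ℤ) (f.content) = 0 := by
          have := hVa0
          rw [haj 0 (by omega), emultiplicity_mul hPZ] at this
          exact (add_eq_zero.1 this).1
        have hVq : ∀ j, j ≤ n → emultiplicity ((P:ℕ):ℤ) (q.coeff j)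
            = emultiplicity ((P:ℕ):ℤ) (a j) := by
          intro j hj
          rw [haj j hj, emultiplicity_mul hPZ, hVcont, zero_add]
        have hnat : ∀ j, 0 < j → j ≤ n → a j ≠ 0 → j * α i ≤ n * padicValInt P (a j) := by
          intro j hj1 hjn hane
          rcases eq_or_lt_of_le hjn with rfl | hjlt
          · rw [hvn]
          · have hh2 := hineq i j hj1 (by omega)
            rw [hv0, hvn] at hh2
            simpa using hh2
        have hkey := keyA P hPp g h hgpos hhpos (α i)
          (by rw [hghq, hVq 0 (by omega)]; exact hVa0)
          (by rw [hsumdeg, hghq, hVq n le_rfl]; exact hVan)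
          (by
            intro j hj
            rw [hsumdeg] at hj ⊢
            rw [hghq, hVq j hj]
            rcases Nat.eq_zero_or_pos j with rfl | hj1
            · simp
            by_cases hane : a j = 0
            · rw [hane, emultiplicity_zero, ENat.mul_top (by exact_mod_cast (by omega : n ≠ 0))]
              exact le_top
            · rw [emu_eq_padic hPp hane]
              have := hnat j hj1 hj hane
              rw [← Nat.cast_mul, ← Nat.cast_mul]
              exact_mod_cast this)
        rwa [hsumdeg] at hkey
      · -- ν(an) = 0, ν(a0) = α i : use keyB
        have hVa0 : emultiplicity ((P:ℕ):ℤ) (a n) = 0 := by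
          rw [emu_eq_padic hPp han, hvn, Nat.cast_zero]
        have hVan : emultiplicity ((P:ℕ):ℤ) (a 0) = ((α i : ℕ):ℕ∞) := by
          rw [emu_eq_padic hPp ha0, hv0]
        have hVcont : emultiplicity ((P:ℕ):ℤ) (f.content) = 0 := by
          have := hVa0
          rw [haj n le_rfl, emultiplicity_mul hPZ] at this
          exact (add_eq_zero.1 this).1
        have hVq : ∀ j, j ≤ n → emultiplicity ((P:ℕ):ℤ) (q.coeff j)
            = emultiplicity ((P:ℕ):ℤ) (a j) := by
          intro j hj
          rw [haj j hj, emultiplicity_mul hPZ, hVcont, zero_add]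
        have hnat : ∀ j, 0 < j → j ≤ n → a j ≠ 0 →
            (n - j) * α i ≤ n * padicValInt P (a j) := by
          intro j hj1 hjn hane
          rcases eq_or_lt_of_le hjn with rfl | hjlt
          · simp
          · have hh2 := hineq i j hj1 (by omega)
            rw [hv0, hvn] at hh2
            simpa using hh2
        have hkey := keyB P hPp g h hgpos hhpos (α i)
          (by rw [hsumdeg, hghq, hVq n le_rfl]; exact hVa0)
          (by rw [hghq, hVq 0 (by omega)]; exact hVan)
          (by
            intro j hj
            rw [hsumdeg] at hj ⊢
            rw [hghq, hVq j hj]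
            rcases Nat.eq_zero_or_pos j with rfl | hj1
            · rw [Nat.sub_zero, hVan]
            by_cases hane : a j = 0
            · rw [hane, emultiplicity_zero, ENat.mul_top (by exact_mod_cast (by omega : n ≠ 0))]
              exact le_top
            · rw [emu_eq_padic hPp hane]
              have := hnat j hj1 hj hane
              rw [← Nat.cast_mul, ← Nat.cast_mul]
              exact_mod_cast this)
        rwa [hsumdeg] at hkey
    -- combine over all i
    have hdvd2 : ∀ i : Fin k, n ∣ g.natDegree * Nat.gcd (α i) n := by
      intro i
      rw [← Nat.gcd_mul_left]
      exact Nat.dvd_gcd (hdvd i) ⟨g.natDegree, (mul_comm _ _)⟩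
    have hdvdd : n ∣ g.natDegree := by
      have h3 : n ∣ Finset.univ.gcd (fun i : Fin k => g.natDegree * Nat.gcd (α i) n) :=
        Finset.dvd_gcd (fun i _ => hdvd2 i)
      rwa [Finset.gcd_mul_left, normalize_eq, hgcd, mul_one] at h3
    have : n ≤ g.natDegree := Nat.le_of_dvd hgpos hdvdd
    omega
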